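/- If z = e^{iλ(s)} with λ real satisfies the characteristic equation of a symmetric method applied to y'' = -ω²y, and the phase lag is PL(s) = s - λ(s) = c s^{q+2} + O(s^{q+4}), then for the classical Quinlan–Tremaine method the leading phase-lag satisfies: the numerator function Φ(s) = 2 sum_{j=1}^{5} A_j(s²) cos(js) + A_0(s²) has Taylor expansion Φ(s) = C s^{12} + O(s^{14}) at s = 0 for some nonzero constant C, where A_j(s²) = a_{5-j} + s² b_{5-j} with the classical coefficients. -/

import Mathlib

open Real Filter Asymptotics

/-- The phase-lag numerator `Φ(s) = 2 ∑_{j=1}^{5} A_j(s²) cos(js) + A_0(s²)` of the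
classical Quinlan–Tremaine method, with `A_j(s²) = a_{5-j} + s² b_{5-j}`. -/
noncomputable def qtPhi (s : ℝ) : ℝ :=
  2 * ((1 + s ^ 2 * (-704183 / 60480)) * Real.cos s
      + (-1 + s ^ 2 * (597859 / 60480)) * Real.cos (2 * s)
      + (1 + s ^ 2 * (-17327 / 8640)) * Real.cos (3 * s)
      + (-1 + s ^ 2 * (399187 / 241920)) * Real.cos (4 * s)
      + (1 + s ^ 2 * 0) * Real.cos (5 * s))
    + (-2 + s ^ 2 * (465133 / 24192))

noncomputable def cosT (x : ℝ) : ℝ :=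
  1 - x^2/2 + x^4/24 - x^6/720 + x^8/40320 - x^10/3628800 + x^12/479001600

open Complex in
theorem cosBound (x : ℝ) (hx : |x| ≤ 1) : |Real.cos x - cosT x| ≤ |x|^14 := by
  have h1 : ‖(x:ℂ) * I‖ ≤ 1 := by simpa using hx
  have h := Complex.exp_bound h1 (n := 14) (by norm_num)
  have hre : (∑ m ∈ Finset.range 14, ((x:ℂ)*I)^m / (m.factorial : ℂ)).re = cosT x := by
    simp [cosT, Finset.sum_range_succ, mul_pow, pow_succ, Complex.ext_iff, Nat.factorial]
    ring
  have hcos : Real.cos x = (Complex.exp ((x:ℂ)*I)).re := by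
    rw [Complex.exp_mul_I]; simp [Complex.cos_ofReal_re]
  have h2 : |Real.cos x - cosT x|
      ≤ ‖Complex.exp ((x:ℂ)*I) - ∑ m ∈ Finset.range 14, ((x:ℂ)*I)^m / (m.factorial : ℂ)‖ := by
    rw [hcos, ← hre, ← Complex.sub_re]
    exact Complex.abs_re_le_norm _
  refine h2.trans (h.trans ?_)
  have h3 : ‖(x:ℂ)*I‖ = |x| := by simp
  rw [h3]
  have h4 : (0:ℝ) ≤ |x| ^ 14 := pow_nonneg (abs_nonneg x) 14
  have : ((Nat.succ 14 : ℕ) : ℝ) * (((Nat.factorial 14 : ℕ):ℝ) * (14:ℝ))⁻¹ ≤ 1 := by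
    norm_num [Nat.factorial]
  nlinarith

/-- The phase-lag numerator of the classical Quinlan–Tremaine method has Taylor
expansion `Φ(s) = C s¹² + O(s¹⁴)` at `s = 0` for some nonzero constant `C`. -/
theorem stmt_18 :
    ∃ C : ℝ, C ≠ 0 ∧
      (fun s : ℝ => qtPhi s - C * s ^ 12) =O[nhds (0 : ℝ)] fun s : ℝ => s ^ 14 := by
  refine ⟨52559/912384, by norm_num, ?_⟩
  rw [isBigO_iff]
  refine ⟨10^12, ?_⟩
  filter_upwards [Metric.ball_mem_nhds (0:ℝ) (by norm_num : (0:ℝ) < 1/5)] with s hs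
  have hs' : |s| < 1/5 := by simpa [Real.dist_eq] using hs
  set t := |s| with ht
  have ht0 : 0 ≤ t := abs_nonneg s
  have hs2 : s^2 ≤ 1/25 := by nlinarith [sq_abs s]
  have hs2' : 0 ≤ s^2 := sq_nonneg s
  have key : qtPhi s - (52559/912384)*s^12 =
      2*((1 + s^2*(-704183/60480))*(Real.cos s - cosT s)
        + (-1 + s^2*(597859/60480))*(Real.cos (2*s) - cosT (2*s))
        + (1 + s^2*(-17327/8640))*(Real.cos (3*s) - cosT (3*s))
        + (-1 + s^2*(399187/241920))*(Real.cos (4*s) - cosT (4*s))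
        + (1 + s^2*0)*(Real.cos (5*s) - cosT (5*s)))
      + (746436023/6706022400)*s^14 := by
    simp only [qtPhi, cosT]; ring
  -- remainder bounds
  have e1 : |Real.cos s - cosT s| ≤ t^14 := cosBound s (by linarith)
  have e2 : |Real.cos (2*s) - cosT (2*s)| ≤ 2^14 * t^14 := by
    have := cosBound (2*s) (by rw [abs_mul]; norm_num; linarith)
    calc |Real.cos (2*s) - cosT (2*s)| ≤ |2*s|^14 := this
      _ = 2^14 * t^14 := by rw [abs_mul, mul_pow]; norm_num [ht]
  have e3 : |Real.cos (3*s) - cosT (3*s)| ≤ 3^14 * t^14 := by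
    have := cosBound (3*s) (by rw [abs_mul]; norm_num; linarith)
    calc |Real.cos (3*s) - cosT (3*s)| ≤ |3*s|^14 := this
      _ = 3^14 * t^14 := by rw [abs_mul, mul_pow]; norm_num [ht]
  have e4 : |Real.cos (4*s) - cosT (4*s)| ≤ 4^14 * t^14 := by
    have := cosBound (4*s) (by rw [abs_mul]; norm_num; linarith)
    calc |Real.cos (4*s) - cosT (4*s)| ≤ |4*s|^14 := this
      _ = 4^14 * t^14 := by rw [abs_mul, mul_pow]; norm_num [ht]
  have e5 : |Real.cos (5*s) - cosT (5*s)| ≤ 5^14 * t^14 := by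
    have := cosBound (5*s) (by rw [abs_mul]; norm_num; linarith)
    calc |Real.cos (5*s) - cosT (5*s)| ≤ |5*s|^14 := this
      _ = 5^14 * t^14 := by rw [abs_mul, mul_pow]; norm_num [ht]
  -- coefficient bounds
  have c1 : |1 + s^2*(-704183/60480)| ≤ 2 := by rw [abs_le]; constructor <;> linarith
  have c2 : |-1 + s^2*(597859/60480)| ≤ 2 := by rw [abs_le]; constructor <;> linarith
  have c3 : |1 + s^2*(-17327/8640)| ≤ 2 := by rw [abs_le]; constructor <;> linarith
  have c4 : |-1 + s^2*(399187/241920)| ≤ 2 := by rw [abs_le]; constructor <;> linarith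
  have c5 : |1 + s^2*0| ≤ 2 := by rw [abs_le]; constructor <;> linarith
  have ht14 : 0 ≤ t^14 := pow_nonneg ht0 14
  have m1 : |(1 + s^2*(-704183/60480))*(Real.cos s - cosT s)| ≤ 2 * t^14 := by
    rw [abs_mul]; exact mul_le_mul c1 e1 (abs_nonneg _) (by norm_num)
  have m2 : |(-1 + s^2*(597859/60480))*(Real.cos (2*s) - cosT (2*s))| ≤ 2 * (2^14 * t^14) := by
    rw [abs_mul]; exact mul_le_mul c2 e2 (abs_nonneg _) (by norm_num)
  have m3 : |(1 + s^2*(-17327/8640))*(Real.cos (3*s) - cosT (3*s))| ≤ 2 * (3^14 * t^14) := by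
    rw [abs_mul]; exact mul_le_mul c3 e3 (abs_nonneg _) (by norm_num)
  have m4 : |(-1 + s^2*(399187/241920))*(Real.cos (4*s) - cosT (4*s))| ≤ 2 * (4^14 * t^14) := by
    rw [abs_mul]; exact mul_le_mul c4 e4 (abs_nonneg _) (by norm_num)
  have m5 : |(1 + s^2*0)*(Real.cos (5*s) - cosT (5*s))| ≤ 2 * (5^14 * t^14) := by
    rw [abs_mul]; exact mul_le_mul c5 e5 (abs_nonneg _) (by norm_num)
  have hlast : |(746436023/6706022400 : ℝ)*s^14| ≤ 1 * t^14 := by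
    rw [abs_mul, abs_pow]
    have : |(746436023/6706022400 : ℝ)| ≤ 1 := by rw [abs_le]; norm_num
    exact mul_le_mul this le_rfl ht14 (by norm_num)
  set A := (1 + s^2*(-704183/60480))*(Real.cos s - cosT s)
  set B := (-1 + s^2*(597859/60480))*(Real.cos (2*s) - cosT (2*s))
  set Cc := (1 + s^2*(-17327/8640))*(Real.cos (3*s) - cosT (3*s))
  set Dd := (-1 + s^2*(399187/241920))*(Real.cos (4*s) - cosT (4*s))
  set E := (1 + s^2*0)*(Real.cos (5*s) - cosT (5*s))
  set F := (746436023/6706022400 : ℝ)*s^14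
  have habs : |2*(A+B+Cc+Dd+E) + F| ≤ 2*(|A|+|B|+|Cc|+|Dd|+|E|) + |F| := by
    have h1 := abs_add_le (2*(A+B+Cc+Dd+E)) F
    have h2 : |2*(A+B+Cc+Dd+E)| = 2*|A+B+Cc+Dd+E| := by rw [abs_mul]; norm_num
    have h3 := abs_add_le (A+B+Cc+Dd) E
    have h4 := abs_add_le (A+B+Cc) Dd
    have h5 := abs_add_le (A+B) Cc
    have h6 := abs_add_le A B
    linarith
  have hnorm : ‖qtPhi s - (52559/912384 : ℝ)*s^12‖ = |2*(A+B+Cc+Dd+E) + F| := by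
    rw [Real.norm_eq_abs, key]
  have hgoal : ‖qtPhi s - (52559/912384 : ℝ)*s^12‖ ≤ 10^12 * t^14 := by
    rw [hnorm]
    calc |2*(A+B+Cc+Dd+E) + F| ≤ 2*(|A|+|B|+|Cc|+|Dd|+|E|) + |F| := habs
      _ ≤ 2*(2*t^14 + 2*(2^14*t^14) + 2*(3^14*t^14) + 2*(4^14*t^14) + 2*(5^14*t^14)) + 1*t^14 := by
          linarith
      _ ≤ 10^12 * t^14 := by linarith
  calc ‖qtPhi s - (52559/912384 : ℝ)*s^12‖ ≤ 10^12 * t^14 := hgoal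
    _ = 10^12 * ‖s^14‖ := by rw [Real.norm_eq_abs, abs_pow]
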